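/- For every real number z with −1 < z < 1/2, −log(1−z) = Σ_{j=1}^{∞} (−1)^{j−1} · H_j · z^j / (1−z)^{j+1}, where the series on the right converges. -/

import Mathlib

/-- The `r`-order harmonic number `H r n = Σ_{m=1}^{n} 1/m^r`. -/
noncomputable def H (r n : ℕ) : ℝ :=
  ∑ m ∈ Finset.Icc 1 n, 1 / (m : ℝ) ^ r

theorem stmt_16 (z : ℝ) (hz₁ : -1 < z) (hz₂ : z < 1 / 2) :
    HasSum (fun j : ℕ => (-1 : ℝ) ^ j * H 1 (j + 1) * z ^ (j + 1) / (1 - z) ^ (j + 2))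
      (-Real.log (1 - z)) := by
  have h1z : (0 : ℝ) < 1 - z := by linarith
  have h1z' : (1 : ℝ) - z ≠ 0 := ne_of_gt h1z
  set x : ℝ := -z / (1 - z) with hxdef
  have hx : |x| < 1 := by
    rw [abs_div, abs_of_pos h1z, div_lt_one h1z, abs_lt]
    constructor <;> [linarith; linarith]
  set f : ℕ → ℝ := fun n => x ^ n / n with hf
  set g : ℕ → ℝ := fun n => x ^ n with hg
  have hf0 : f 0 = 0 := by simp [hf]
  have hfnorm : Summable fun n => ‖f n‖ := by
    apply Summable.of_nonneg_of_le (fun n => norm_nonneg _) (fun n => ?_)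
      (summable_geometric_of_lt_one (abs_nonneg x) hx)
    rcases Nat.eq_zero_or_pos n with h | h
    · simp [h, hf]
    · have : ‖f n‖ = |x| ^ n / n := by
        simp [hf, abs_div, abs_pow, Nat.abs_cast]
      rw [this]
      have hn1 : (1 : ℝ) ≤ n := by exact_mod_cast h
      calc |x| ^ n / n ≤ |x| ^ n / 1 :=
            div_le_div_of_nonneg_left (pow_nonneg (abs_nonneg x) n) one_pos hn1
        _ = |x| ^ n := div_one _
  have hgnorm : Summable fun n => ‖g n‖ := by
    simpa [hg, abs_pow] using summable_geometric_of_lt_one (abs_nonneg x) hx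
  have hflog : HasSum f (-Real.log (1 - x)) := by
    have h1 : HasSum (fun n : ℕ => f (n + 1)) (-Real.log (1 - x)) := by
      simpa [hf] using Real.hasSum_pow_div_log_of_abs_lt_one hx
    exact (hasSum_nat_add_iff' 1).mp (by simpa [hf0] using h1)
  have hggeo : HasSum g (1 - x)⁻¹ := by
    simpa [hg] using hasSum_geometric_of_norm_lt_one (ξ := x) (by simpa using hx)
  have hC : HasSum (fun n => ∑ k ∈ Finset.range (n + 1), f k * g (n - k))
      ((-Real.log (1 - x)) * (1 - x)⁻¹) := by
    have := hasSum_sum_range_mul_of_summable_norm hfnorm hgnorm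
    rwa [hflog.tsum_eq, hggeo.tsum_eq] at this
  have key : ∀ n, ∑ k ∈ Finset.range (n + 1), f k * g (n - k) = H 1 n * x ^ n := by
    intro n
    have : ∀ k ∈ Finset.range (n + 1), f k * g (n - k) = (1 / k) * x ^ n := by
      intro k hk
      have hkn : k ≤ n := Nat.lt_succ_iff.mp (Finset.mem_range.mp hk)
      have : x ^ k * x ^ (n - k) = x ^ n := by
        rw [← pow_add, Nat.add_sub_cancel' hkn]
      simp only [hf, hg]
      rw [div_mul_eq_mul_div, this, div_eq_mul_inv, one_div, mul_comm]
    rw [Finset.sum_congr rfl this, ← Finset.sum_mul]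
    congr 1
    rw [H]
    simp only [pow_one]
    rw [show Finset.range (n + 1) = insert 0 (Finset.Icc 1 n) by
      ext k; simp [Nat.lt_succ_iff]; omega]
    rw [Finset.sum_insert (by simp)]
    simp
  rw [funext key] at hC
  have hshift : HasSum (fun j : ℕ => H 1 (j + 1) * x ^ (j + 1))
      ((-Real.log (1 - x)) * (1 - x)⁻¹) := by
    apply (hasSum_nat_add_iff (f := fun n => H 1 n * x ^ n) 1).mpr
    have h0 : H 1 0 = 0 := by simp [H]
    simpa [h0] using hC
  have hfin := hshift.mul_left (-(1 - z)⁻¹)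
  have h1x : 1 - x = (1 - z)⁻¹ := by
    rw [hxdef]
    field_simp
    ring
  have hlog : Real.log (1 - x) = -Real.log (1 - z) := by
    rw [h1x, Real.log_inv]
  have hsum_eq : -(1 - z)⁻¹ * (-Real.log (1 - x) * (1 - x)⁻¹) = -Real.log (1 - z) := by
    rw [hlog, h1x, inv_inv]
    field_simp
  rw [hsum_eq] at hfin
  convert hfin using 1
  · rfl
  funext j
  have hxpow : x ^ (j + 1) = (-1) ^ (j + 1) * z ^ (j + 1) / (1 - z) ^ (j + 1) := by
    rw [hxdef, div_pow, neg_pow z]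
  rw [hxpow]
  rw [pow_succ (-1 : ℝ) j, pow_succ (1 - z) (j + 1)]
  field_simp
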